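/- The integral over ℝ³ of V·ΛW is nonzero, where V = 5W⁴ and ΛW = (1/2)W + x·∇W. -/

import Mathlib

open MeasureTheory

/-- The ground state soliton `W(x) = √3 (1 + 3|x|²)^(-1/2)` on `ℝ³`. -/
noncomputable def W (x : Fin 3 → ℝ) : ℝ :=
  Real.sqrt 3 * (1 + 3 * ∑ i, x i ^ 2) ^ (-(1 : ℝ) / 2)

/-- The `i`-th partial derivative of a function on `ℝ³`. -/
noncomputable def pderiv3 (i : Fin 3) (f : (Fin 3 → ℝ) → ℝ) (x : Fin 3 → ℝ) : ℝ :=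
  fderiv ℝ f x (Pi.single i 1)

/-- The Euclidean Laplacian on `ℝ³`, `Δf = ∑ᵢ ∂ᵢ∂ᵢ f`. -/
noncomputable def laplacian3 (f : (Fin 3 → ℝ) → ℝ) (x : Fin 3 → ℝ) : ℝ :=
  ∑ i, pderiv3 i (pderiv3 i f) x

/-- `ΛW = (1/2)W + x·∇W`, the scaling derivative of the soliton. -/
noncomputable def LamW (x : Fin 3 → ℝ) : ℝ :=
  (1 / 2) * W x + ∑ i, x i * pderiv3 i W x

section Aux

open Real Filter Topology Set

noncomputable def prjCLM (i : Fin 3) : (Fin 3 → ℝ) →L[ℝ] ℝ :=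
  ContinuousLinearMap.proj i

lemma sum_sq_pos (x : Fin 3 → ℝ) : (0:ℝ) < 1 + 3 * ∑ i, x i ^ 2 := by
  have : (0:ℝ) ≤ ∑ i, x i ^ 2 := Finset.sum_nonneg fun i _ => sq_nonneg _
  linarith

lemma hasFDerivAt_sumsq (x : Fin 3 → ℝ) :
    HasFDerivAt (fun x : Fin 3 → ℝ => ∑ i, x i ^ 2)
      (∑ i : Fin 3, (2 * x i) • prjCLM i) x := by
  apply HasFDerivAt.fun_sum
  intro i _
  have h1 : HasFDerivAt (fun x : Fin 3 → ℝ => x i) (prjCLM i) x :=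
    (prjCLM i).hasFDerivAt
  have h2 := (hasDerivAt_pow 2 (x i)).comp_hasFDerivAt x h1
  simpa [pow_one, mul_comm, Function.comp_def] using h2

lemma hasFDerivAt_W (x : Fin 3 → ℝ) :
    HasFDerivAt W ((Real.sqrt 3 * ((-(1:ℝ)/2) * (1 + 3 * ∑ i, x i ^ 2) ^ (-(1:ℝ)/2 - 1) * 3)) •
      (∑ i : Fin 3, (2 * x i) • prjCLM i)) x := by
  have hu := sum_sq_pos x
  have hin : HasFDerivAt (fun x : Fin 3 → ℝ => 1 + 3 * ∑ i, x i ^ 2)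
      ((3:ℝ) • (∑ i : Fin 3, (2 * x i) • prjCLM i)) x :=
    ((hasFDerivAt_sumsq x).const_mul 3).const_add 1
  have hr : HasDerivAt (fun t : ℝ => t ^ (-(1:ℝ)/2))
      ((-(1:ℝ)/2) * (1 + 3 * ∑ i, x i ^ 2) ^ (-(1:ℝ)/2 - 1)) (1 + 3 * ∑ i, x i ^ 2) :=
    Real.hasDerivAt_rpow_const (Or.inl hu.ne')
  have h := (hr.comp_hasFDerivAt x hin).const_mul (Real.sqrt 3)
  refine h.congr_fderiv ?_
  ext v
  simp [ContinuousLinearMap.smul_apply]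
  ring

lemma pderiv3_W (i : Fin 3) (x : Fin 3 → ℝ) :
    pderiv3 i W x = -3 * Real.sqrt 3 * x i * (1 + 3 * ∑ j, x j ^ 2) ^ (-(1:ℝ)/2 - 1) := by
  rw [pderiv3, (hasFDerivAt_W x).fderiv]
  simp [prjCLM, ContinuousLinearMap.proj_apply, Pi.single_apply, Finset.sum_ite_eq']
  ring

lemma integrand_eq (x : Fin 3 → ℝ) :
    (5 * (W x) ^ 4) * LamW x =
      (45 * Real.sqrt 3 / 2) * ((1 - 3 * ∑ i, x i ^ 2) *
        (1 + 3 * ∑ i, x i ^ 2) ^ (-(7:ℝ)/2)) := by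
  set s : ℝ := ∑ i, x i ^ 2 with hs
  have hu : (0:ℝ) < 1 + 3 * s := sum_sq_pos x
  have hsum : ∑ i, x i * pderiv3 i W x =
      -3 * Real.sqrt 3 * s * (1 + 3 * s) ^ (-(1:ℝ)/2 - 1) := by
    have h : ∀ i ∈ Finset.univ, x i * pderiv3 i W x =
        (-3 * Real.sqrt 3 * (1 + 3*s) ^ (-(1:ℝ)/2 - 1)) * x i ^ 2 := fun i _ => by
      rw [pderiv3_W, ← hs]; ring
    rw [Finset.sum_congr rfl h, ← Finset.mul_sum, ← hs]; ring
  have h9 : Real.sqrt 3 ^ 4 = 9 := by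
    rw [show (4:ℕ) = 2*2 from rfl, pow_mul, Real.sq_sqrt (by norm_num : (0:ℝ) ≤ 3)]
    norm_num
  have h4 : (W x) ^ 4 = 9 * (1 + 3 * s) ^ (-(2:ℝ)) := by
    rw [W, mul_pow, ← Real.rpow_natCast ((1 + 3*s) ^ (-(1:ℝ)/2)) 4,
      ← Real.rpow_mul hu.le, h9]
    norm_num
  have m1 : (1 + 3*s) ^ (-(2:ℝ)) * (1 + 3*s) ^ (-(1:ℝ)/2)
      = (1 + 3*s) * (1 + 3*s) ^ (-(7:ℝ)/2) := by
    rw [← Real.rpow_add hu]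
    nth_rewrite 2 [← Real.rpow_one (1 + 3*s)]
    rw [← Real.rpow_add hu]
    norm_num
  have m2 : (1 + 3*s) ^ (-(2:ℝ)) * (1 + 3*s) ^ (-(1:ℝ)/2 - 1)
      = (1 + 3*s) ^ (-(7:ℝ)/2) := by
    rw [← Real.rpow_add hu]; norm_num
  rw [LamW, hsum, h4, W, ← hs]
  linear_combination (45 * Real.sqrt 3 / 2) * m1 - 135 * Real.sqrt 3 * s * m2

noncomputable def f0 (r : ℝ) : ℝ := r^2 * ((1 - 3*r^2) * (1 + 3*r^2) ^ (-(7:ℝ)/2))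

noncomputable def g0 (r : ℝ) : ℝ := (r^3/3 - r^5/5) * (1 + 3*r^2) ^ (-(5:ℝ)/2)

lemma one_add_pos (r : ℝ) : (0:ℝ) < 1 + 3*r^2 := by positivity

lemma hasDerivAt_g0 (r : ℝ) : HasDerivAt g0 (f0 r) r := by
  have hu := one_add_pos r
  have h1 : HasDerivAt (fun r : ℝ => r^3/3 - r^5/5) (r^2 - r^4) r := by
    have := ((hasDerivAt_pow 3 r).div_const 3).sub ((hasDerivAt_pow 5 r).div_const 5)
    exact this.congr_deriv (by push_cast; ring)
  have hin : HasDerivAt (fun r : ℝ => 1 + 3*r^2) (6*r) r := by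
    have := ((hasDerivAt_pow 2 r).const_mul 3).const_add 1
    exact this.congr_deriv (by push_cast; ring)
  have hr : HasDerivAt (fun t : ℝ => t ^ (-(5:ℝ)/2))
      ((-(5:ℝ)/2) * (1 + 3*r^2) ^ (-(5:ℝ)/2 - 1)) (1 + 3*r^2) :=
    Real.hasDerivAt_rpow_const (Or.inl hu.ne')
  have h2 : HasDerivAt (fun r : ℝ => (1 + 3*r^2) ^ (-(5:ℝ)/2))
      ((-(5:ℝ)/2) * (1 + 3*r^2) ^ (-(5:ℝ)/2 - 1) * (6*r)) r := by exact hr.comp r hin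
  have h := h1.mul h2
  have m1 : (1 + 3*r^2) ^ (-(5:ℝ)/2) = (1 + 3*r^2) * (1 + 3*r^2) ^ (-(7:ℝ)/2) := by
    nth_rewrite 2 [← Real.rpow_one (1 + 3*r^2)]
    rw [← Real.rpow_add hu]; norm_num
  have m2 : (1 + 3*r^2) ^ (-(5:ℝ)/2 - 1) = (1 + 3*r^2) ^ (-(7:ℝ)/2) := by norm_num
  refine h.congr_deriv ?_
  rw [f0, m1, m2]; ring

set_option maxHeartbeats 1000000 in
lemma tendsto_g0 : Tendsto g0 atTop (𝓝 (-(1/5) * (1/3 : ℝ) ^ ((5:ℝ)/2))) := by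
  have h0 : Tendsto (fun r : ℝ => (r^2)⁻¹) atTop (𝓝 0) :=
    (tendsto_pow_atTop two_ne_zero).inv_tendsto_atTop
  have h1 : Tendsto (fun r : ℝ => r^2/(1 + 3*r^2)) atTop (𝓝 (1/3)) := by
    have h : Tendsto (fun r : ℝ => ((r^2)⁻¹ + 3)⁻¹) atTop (𝓝 ((0 + 3)⁻¹)) :=
      (h0.add tendsto_const_nhds).inv₀ (by norm_num)
    norm_num at h
    refine h.congr' ?_
    filter_upwards [eventually_gt_atTop (0:ℝ)] with r hr
    have : r^2 ≠ 0 := by positivity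
    field_simp
  have h2 : Tendsto (fun r : ℝ => (r^2/(1 + 3*r^2)) ^ ((5:ℝ)/2)) atTop
      (𝓝 ((1/3 : ℝ) ^ ((5:ℝ)/2))) :=
    (Real.continuousAt_rpow_const _ _ (Or.inl (by norm_num))).tendsto.comp h1
  have h3 : Tendsto (fun r : ℝ => (r^2)⁻¹/3 - 1/5) atTop (𝓝 (0/3 - 1/5)) :=
    (h0.div_const 3).sub tendsto_const_nhds
  have h := h3.mul h2
  rw [show (0/3 - 1/5) * ((1/3 : ℝ) ^ ((5:ℝ)/2)) = -(1/5) * (1/3 : ℝ) ^ ((5:ℝ)/2) by ring] at h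
  refine h.congr' ?_
  filter_upwards [eventually_gt_atTop (0:ℝ)] with r hr
  have hu := one_add_pos r
  rw [g0]
  have h5 : (r^2 : ℝ) ^ ((5:ℝ)/2) = r^5 := by
    rw [← Real.rpow_natCast r 2, ← Real.rpow_mul hr.le, ← Real.rpow_natCast r 5]
    norm_num
  have h6 : (r^2/(1+3*r^2)) ^ ((5:ℝ)/2) = r^5 / (1+3*r^2) ^ ((5:ℝ)/2) := by
    rw [Real.div_rpow (by positivity) hu.le, h5]
  have h7 : (1+3*r^2:ℝ) ^ (-(5:ℝ)/2) = ((1+3*r^2) ^ ((5:ℝ)/2))⁻¹ := by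
    rw [show (-(5:ℝ)/2) = -((5:ℝ)/2) by norm_num, Real.rpow_neg hu.le]
  rw [h6, h7]
  have hp : (1+3*r^2:ℝ) ^ ((5:ℝ)/2) ≠ 0 := by positivity
  have hr2 : r^2 ≠ 0 := by positivity
  field_simp

lemma cont_f0 : Continuous f0 := by
  apply (continuous_pow 2).mul
  apply Continuous.mul (by continuity)
  exact (by continuity : Continuous fun r : ℝ => 1 + 3*r^2).rpow_const
    fun x => Or.inl (one_add_pos x).ne'

lemma intOn_f0 : IntegrableOn f0 (Ioi (0:ℝ)) := by
  rw [← Ioc_union_Ioi_eq_Ioi (zero_le_one)]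
  refine IntegrableOn.union (cont_f0.integrableOn_Ioc) ?_
  have hb : IntegrableOn (fun r : ℝ => 4 * r ^ (-3:ℝ)) (Ioi 1) :=
    (integrableOn_Ioi_rpow_of_lt (by norm_num) one_pos).const_mul 4
  refine hb.mono' cont_f0.aestronglyMeasurable.restrict ?_
  rw [ae_restrict_iff' measurableSet_Ioi]
  refine ae_of_all _ fun r hr => ?_
  have hr1 : (1:ℝ) < r := hr
  have hr0 : (0:ℝ) < r := lt_trans one_pos hr1
  have hA : (1 + 3*r^2) ^ (-(7:ℝ)/2) ≤ (r^2) ^ (-(7:ℝ)/2) :=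
    Real.rpow_le_rpow_of_nonpos (by positivity) (by nlinarith) (by norm_num)
  have habs : |1 - 3*r^2| ≤ 4*r^2 := by
    rw [abs_le]; constructor <;> nlinarith
  have hA0 : (0:ℝ) ≤ (1 + 3*r^2) ^ (-(7:ℝ)/2) := Real.rpow_nonneg (one_add_pos r).le _
  have key : |1 - 3*r^2| * (1 + 3*r^2) ^ (-(7:ℝ)/2) ≤ (4*r^2) * ((r^2:ℝ) ^ (-(7:ℝ)/2)) :=
    mul_le_mul habs hA hA0 (by positivity)
  have hB : ((r^2:ℝ)) ^ (-(7:ℝ)/2) = r ^ (-(7:ℝ)) := by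
    rw [← Real.rpow_natCast r 2, ← Real.rpow_mul hr0.le]
    norm_num
  have hfin : r^2 * ((4*r^2) * ((r^2:ℝ) ^ (-(7:ℝ)/2))) = 4 * r ^ (-3:ℝ) := by
    rw [hB, show r^2 * (4*r^2 * r ^ (-(7:ℝ))) = 4*(r^(4:ℕ) * r ^ (-(7:ℝ))) by ring,
      ← Real.rpow_natCast r 4, ← Real.rpow_add hr0]
    norm_num
  calc ‖f0 r‖ = r^2 * (|1 - 3*r^2| * (1 + 3*r^2) ^ (-(7:ℝ)/2)) := by
        rw [f0, Real.norm_eq_abs, abs_mul, abs_mul, abs_of_nonneg (sq_nonneg r),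
          abs_of_nonneg hA0]
    _ ≤ r^2 * ((4*r^2) * ((r^2:ℝ) ^ (-(7:ℝ)/2))) :=
        mul_le_mul_of_nonneg_left key (sq_nonneg r)
    _ = 4 * r ^ (-3:ℝ) := hfin

lemma integral_f0 : ∫ r in Ioi (0:ℝ), f0 r = -(1/5) * (1/3 : ℝ) ^ ((5:ℝ)/2) := by
  have h := integral_Ioi_of_hasDerivAt_of_tendsto' (a := 0)
    (fun x _ => hasDerivAt_g0 x) intOn_f0 tendsto_g0
  rw [h, g0]
  norm_num

end Aux

/-- `∫_{ℝ³} V ΛW ≠ 0` with `V = 5W⁴`. -/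
theorem integral_V_LamW_ne_zero :
    (∫ x : Fin 3 → ℝ, (5 * (W x) ^ 4) * LamW x) ≠ 0 := by
  classical
  set F : ℝ → ℝ := fun r => (45 * Real.sqrt 3 / 2) *
    ((1 - 3*r^2) * (1 + 3*r^2) ^ (-(7:ℝ)/2)) with hF
  have hmp := EuclideanSpace.volume_preserving_symm_measurableEquiv_toLp (Fin 3)
  have h1 : (∫ x : Fin 3 → ℝ, (5 * (W x) ^ 4) * LamW x) =
      ∫ y : EuclideanSpace ℝ (Fin 3), F ‖y‖ := by
    rw [← hmp.integral_comp (MeasurableEquiv.toLp 2 (Fin 3 → ℝ)).symm.measurableEmbedding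
      (fun x => (5 * (W x) ^ 4) * LamW x)]
    refine integral_congr_ae (Filter.EventuallyEq.of_eq (funext fun y => ?_))
    have hy : (MeasurableEquiv.toLp 2 (Fin 3 → ℝ)).symm y = (y : Fin 3 → ℝ) := rfl
    rw [hy, integrand_eq, hF]
    have hnorm : ‖y‖^2 = ∑ i, (y : Fin 3 → ℝ) i ^ 2 := by
      rw [EuclideanSpace.norm_eq]
      simp only [Real.norm_eq_abs, sq_abs]
      exact Real.sq_sqrt (Finset.sum_nonneg fun i _ => sq_nonneg _)
    rw [← hnorm]
  rw [h1, MeasureTheory.integral_fun_norm_addHaar volume F]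
  have hdim : Module.finrank ℝ (EuclideanSpace ℝ (Fin 3)) = 3 := by
    simp [finrank_euclideanSpace]
  rw [hdim]
  have h2 : (∫ y in Set.Ioi (0:ℝ), y ^ (3-1) • F y) =
      (45 * Real.sqrt 3 / 2) * (-(1/5) * (1/3 : ℝ) ^ ((5:ℝ)/2)) := by
    rw [← integral_f0, ← MeasureTheory.integral_const_mul]
    refine setIntegral_congr_fun measurableSet_Ioi fun r _ => ?_
    simp only [hF, smul_eq_mul, f0]
    ring
  rw [h2]
  have hb0 : (volume (Metric.ball (0 : EuclideanSpace ℝ (Fin 3)) 1)).toReal ≠ 0 := by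
    rw [ENNReal.toReal_ne_zero]
    exact ⟨(Metric.measure_ball_pos volume 0 one_pos).ne', measure_ball_lt_top.ne⟩
  have hL : (-(1/5) * (1/3 : ℝ) ^ ((5:ℝ)/2)) ≠ 0 := by
    have : (0:ℝ) < (1/3 : ℝ) ^ ((5:ℝ)/2) := Real.rpow_pos_of_pos (by norm_num) _
    intro h; nlinarith
  have hc : (45 * Real.sqrt 3 / 2 : ℝ) ≠ 0 := by
    have : (0:ℝ) < Real.sqrt 3 := Real.sqrt_pos.mpr (by norm_num)
    positivity
  simp only [smul_eq_mul, nsmul_eq_mul]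
  exact mul_ne_zero (by norm_num) (mul_ne_zero hb0 (mul_ne_zero hc hL))
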